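/- Let v_0, v_1, v_2, v_3 ∈ ℂ² with det(v_i, v_j) ≠ 0 for all i ≠ j. Set c_{ij} := Log N(det(v_i, v_j)), and define w_0 := c_{03} + c_{12} − c_{02} − c_{13}, w_1 := c_{02} + c_{13} − c_{01} − c_{23}, w_2 := c_{01} + c_{23} − c_{03} − c_{12}, and z := (det(v_0,v_3)·det(v_1,v_2)) / (det(v_1,v_3)·det(v_0,v_2)). Then z ≠ 0, z ≠ 1, w_0 + w_1 + w_2 = 0, and there exist integers p and q such that w_0 = Log z + pπi and w_1 = −Log(1 − z) + qπi. (That is, (w_0, w_1, w_2) is a combinatorial flattening of the ideal tetrahedron with cross-ratio parameter z.) -/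

import Mathlib

open Complex

/-- `det(v,w) = αδ − βγ` for column vectors `v = (α,β)`, `w = (γ,δ)` in `ℂ²`. -/
noncomputable def det2 (v w : Fin 2 → ℂ) : ℂ := v 0 * w 1 - v 1 * w 0

/-- For a nonzero `u`, the unique element of `{u, -u}` whose principal argument
lies in `[0, π)`. -/
noncomputable def signNorm (u : ℂ) : ℂ :=
  if 0 ≤ u.arg ∧ u.arg < Real.pi then u else -u

lemma exp_two_mul' (x : ℂ) : Complex.exp (x * 2) = Complex.exp x ^ 2 := by
  rw [show x * 2 = x + x by ring, Complex.exp_add, sq]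

lemma signNorm_sq (u : ℂ) : (signNorm u) ^ 2 = u ^ 2 := by
  unfold signNorm; split <;> ring

lemma signNorm_ne_zero {u : ℂ} (h : u ≠ 0) : signNorm u ≠ 0 := by
  unfold signNorm; split <;> simpa

theorem flattening_of_tetrahedron (v : Fin 4 → Fin 2 → ℂ)
    (hdet : ∀ i j, i ≠ j → det2 (v i) (v j) ≠ 0)
    (c : Fin 4 → Fin 4 → ℂ)
    (hc : ∀ i j, c i j = Complex.log (signNorm (det2 (v i) (v j))))
    (w0 w1 w2 z : ℂ)
    (hw0 : w0 = c 0 3 + c 1 2 - c 0 2 - c 1 3)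
    (hw1 : w1 = c 0 2 + c 1 3 - c 0 1 - c 2 3)
    (hw2 : w2 = c 0 1 + c 2 3 - c 0 3 - c 1 2)
    (hz : z = (det2 (v 0) (v 3) * det2 (v 1) (v 2)) / (det2 (v 1) (v 3) * det2 (v 0) (v 2))) :
    z ≠ 0 ∧ z ≠ 1 ∧ w0 + w1 + w2 = 0 ∧
      ∃ p q : ℤ, w0 = Complex.log z + (p : ℂ) * Real.pi * Complex.I ∧
        w1 = -Complex.log (1 - z) + (q : ℂ) * Real.pi * Complex.I := by
  set d01 := det2 (v 0) (v 1) with hd01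
  set d02 := det2 (v 0) (v 2) with hd02
  set d03 := det2 (v 0) (v 3) with hd03
  set d12 := det2 (v 1) (v 2) with hd12
  set d13 := det2 (v 1) (v 3) with hd13
  set d23 := det2 (v 2) (v 3) with hd23
  have h01 : d01 ≠ 0 := hdet 0 1 (by decide)
  have h02 : d02 ≠ 0 := hdet 0 2 (by decide)
  have h03 : d03 ≠ 0 := hdet 0 3 (by decide)
  have h12 : d12 ≠ 0 := hdet 1 2 (by decide)
  have h13 : d13 ≠ 0 := hdet 1 3 (by decide)
  have h23 : d23 ≠ 0 := hdet 2 3 (by decide)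
  -- Plücker relation
  have pluck : d01 * d23 - d02 * d13 + d03 * d12 = 0 := by
    simp only [hd01, hd02, hd03, hd12, hd13, hd23, det2]; ring
  have hden : d13 * d02 ≠ 0 := mul_ne_zero h13 h02
  have hzne : z ≠ 0 := by
    rw [hz]
    exact div_ne_zero (mul_ne_zero h03 h12) hden
  have h1z : 1 - z = d01 * d23 / (d13 * d02) := by
    rw [hz, eq_div_iff hden, sub_mul, div_mul_cancel₀ _ hden, one_mul]
    linear_combination -pluck
  have h1zne : (1 : ℂ) - z ≠ 0 := by
    rw [h1z]; exact div_ne_zero (mul_ne_zero h01 h23) hden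
  have hz1 : z ≠ 1 := by
    intro h; exact h1zne (by rw [h]; ring)
  -- exponentials of the c's square to the determinants squared
  have ec : ∀ i j, i ≠ j → Complex.exp (c i j) ^ 2 = det2 (v i) (v j) ^ 2 := by
    intro i j hij
    rw [hc, Complex.exp_log (signNorm_ne_zero (hdet i j hij)), signNorm_sq]
  have e03 := ec 0 3 (by decide)
  have e12 := ec 1 2 (by decide)
  have e02 := ec 0 2 (by decide)
  have e13 := ec 1 3 (by decide)
  have e01 := ec 0 1 (by decide)
  have e23 := ec 2 3 (by decide)
  have expne : ∀ x : ℂ, Complex.exp x ≠ 0 := Complex.exp_ne_zero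
  -- exp(2 w0) = z^2
  have key0 : Complex.exp (2 * w0) = Complex.exp (2 * Complex.log z) := by
    have l : Complex.exp w0
        = Complex.exp (c 0 3) * Complex.exp (c 1 2)
          / (Complex.exp (c 0 2) * Complex.exp (c 1 3)) := by
      rw [hw0, Complex.exp_sub, Complex.exp_sub, Complex.exp_add, div_div]
    have r : Complex.exp (2 * Complex.log z) = z ^ 2 := by
      rw [mul_comm, exp_two_mul', Complex.exp_log hzne]
    rw [mul_comm, exp_two_mul', l, r, div_pow, mul_pow, mul_pow, e03, e12, e02, e13, hz]
    field_simp
    rw [← hd03, ← hd12, ← hd02, ← hd13]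
    field_simp
  have key1 : Complex.exp (2 * w1) = Complex.exp (2 * (-Complex.log (1 - z))) := by
    have l : Complex.exp w1
        = Complex.exp (c 0 2) * Complex.exp (c 1 3)
          / (Complex.exp (c 0 1) * Complex.exp (c 2 3)) := by
      rw [hw1, Complex.exp_sub, Complex.exp_sub, Complex.exp_add, div_div]
    have r : Complex.exp (2 * (-Complex.log (1 - z))) = ((1 - z) ^ 2)⁻¹ := by
      rw [mul_comm, exp_two_mul', Complex.exp_neg, Complex.exp_log h1zne, inv_pow]
    rw [mul_comm, exp_two_mul', l, r, div_pow, mul_pow, mul_pow, e02, e13, e01, e23, h1z]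
    field_simp
    rw [← hd02, ← hd13, ← hd01, ← hd23]
    field_simp
  obtain ⟨p, hp⟩ := Complex.exp_eq_exp_iff_exists_int.mp key0
  obtain ⟨q, hq⟩ := Complex.exp_eq_exp_iff_exists_int.mp key1
  refine ⟨hzne, hz1, by rw [hw0, hw1, hw2]; ring, p, q, ?_, ?_⟩
  · linear_combination hp / 2
  · linear_combination hq / 2
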